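/- Let n be a natural number, let q, p : Fin n → ℂ with q injective, and let g ∈ ℂ. Define the n×n complex matrix P by P i i = p i and P i j = i·g/(q i − q j) for i ≠ j, where i is the imaginary unit. Then trace(P²/2) = Σ_i (p i)²/2 + Σ_{i<j} g²/(q i − q j)². -/
import Mathlib


/-- Reduced free Hamiltonian `Tr(P²/2)` for the rational Calogero-Moser Lax matrix `P`
with diagonal entries `p i` and off-diagonal entries `I·g/(q i − q j)`:
it equals the rational Calogero Hamiltonian. -/
theorem trace_calogero_lax_squared (n : ℕ) (q p : Fin n → ℂ)
    (hq : Function.Injective q) (g : ℂ) :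
    Matrix.trace ((1 / 2 : ℂ) •
        (Matrix.of fun i j : Fin n =>
          if i = j then p i else Complex.I * g / (q i - q j)) ^ 2)
      = (∑ i, (p i) ^ 2 / 2)
        + ∑ i, ∑ j, if i < j then g ^ 2 / (q i - q j) ^ 2 else 0 := by
  classical
  set A : Matrix (Fin n) (Fin n) ℂ := Matrix.of fun i j : Fin n =>
    if i = j then p i else Complex.I * g / (q i - q j) with hA
  have key : ∀ i j : Fin n, A i j * A j i =
      if i = j then p i ^ 2 else g ^ 2 / (q i - q j) ^ 2 := by
    intro i j
    by_cases h : i = j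
    · subst h; simp [hA, sq]
    · have hne : q i - q j ≠ 0 := sub_ne_zero.mpr (fun hc => h (hq hc))
      have hne' : q j - q i ≠ 0 := sub_ne_zero.mpr (fun hc => h (hq hc.symm))
      have hji : ¬ (j = i) := fun hc => h hc.symm
      simp only [hA, Matrix.of_apply, if_neg h, if_neg hji]
      rw [div_mul_div_comm]
      have h1 : Complex.I * g * (Complex.I * g) = -(g^2) := by
        have := Complex.I_sq; ring_nf; rw [Complex.I_sq]; ring
      have h2 : (q i - q j) * (q j - q i) = -((q i - q j)^2) := by ring
      rw [h1, h2, neg_div_neg_eq]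
  have htr : Matrix.trace (A ^ 2) = ∑ i, ∑ j, A i j * A j i := by
    simp [Matrix.trace, Matrix.diag, sq, Matrix.mul_apply]
  rw [Matrix.trace_smul, htr]
  have hsum : (∑ i, ∑ j, A i j * A j i)
      = (∑ i, p i ^ 2) + 2 * ∑ i, ∑ j, if i < j then g ^ 2 / (q i - q j) ^ 2 else 0 := by
    have step : ∀ i j : Fin n, A i j * A j i =
        (if i = j then p i ^ 2 else 0)
        + (if i < j then g ^ 2 / (q i - q j) ^ 2 else 0)
        + (if j < i then g ^ 2 / (q i - q j) ^ 2 else 0) := by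
      intro i j
      rw [key]
      rcases lt_trichotomy i j with h | h | h
      · rw [if_neg h.ne, if_neg h.ne, if_pos h, if_neg (not_lt.mpr h.le)]; ring
      · simp [h]
      · rw [if_neg h.ne', if_neg h.ne', if_neg (not_lt.mpr h.le), if_pos h]; ring
    simp only [step, Finset.sum_add_distrib]
    have e1 : (∑ i : Fin n, ∑ j : Fin n, if i = j then p i ^ 2 else 0) = ∑ i, p i ^ 2 := by
      simp [Finset.sum_ite_eq]
    have e2 : (∑ i : Fin n, ∑ j : Fin n, if j < i then g ^ 2 / (q i - q j) ^ 2 else 0)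
        = ∑ i : Fin n, ∑ j : Fin n, if i < j then g ^ 2 / (q i - q j) ^ 2 else 0 := by
      rw [Finset.sum_comm]
      refine Finset.sum_congr rfl fun i _ => Finset.sum_congr rfl fun j _ => ?_
      congr 1
      ring
    rw [e1, e2]; ring
  rw [hsum, smul_eq_mul]
  rw [← Finset.sum_div]
  ring
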